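/- Let F_1 ∈ ℂ^{n×n} be the top-left n×n block of a unitary U ∈ U(r) (n ≤ r), and let μ be any eigenvalue of F_1. Then the time-energy cost max_k |arg λ_k(U)| of U is at least arccos(Re μ). -/

import Mathlib

open Matrix

/-- Sum over `Fin r` of a function vanishing past `n` equals the sum over `Fin n`. -/
private lemma sum_castLE_aux {n r : ℕ} (h : n ≤ r) (f : Fin r → ℂ)
    (hf : ∀ i : Fin r, n ≤ (i : ℕ) → f i = 0) :
    ∑ i, f i = ∑ i : Fin n, f (Fin.castLE h i) := by
  classical
  have h1 : ∑ x ∈ (Finset.univ.image (Fin.castLE h)), f x = ∑ i : Fin n, f (Fin.castLE h i) :=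
    Finset.sum_image (fun x _ y _ hxy => Fin.castLE_injective h hxy)
  rw [← h1]
  refine (Finset.sum_subset (Finset.subset_univ _) fun x _ hx => hf x ?_).symm
  by_contra hlt
  push_neg at hlt
  exact hx (Finset.mem_image.2 ⟨⟨x, hlt⟩, Finset.mem_univ _, rfl⟩)


private lemma exists_low_re_eigenvalue (r : ℕ) (hr : 0 < r) (U : Matrix (Fin r) (Fin r) ℂ)
    (hU1 : U * Uᴴ = 1) (hU2 : Uᴴ * U = 1)
    (w : Fin r → ℂ) (hw0 : w ≠ 0) (μ : ℂ) (cr : ℝ) (hcr : 0 < cr)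
    (key1 : star w ⬝ᵥ (U *ᵥ w) = μ * (cr : ℂ)) (key2 : star w ⬝ᵥ w = (cr : ℂ)) :
    ∃ ν ∈ spectrum ℂ U, ν.re ≤ μ.re ∧ ‖ν‖ = 1 := by
  classical
  set H : Matrix (Fin r) (Fin r) ℂ := U + Uᴴ with hHdef
  have hH : H.IsHermitian := by
    rw [Matrix.IsHermitian, hHdef, conjTranspose_add, conjTranspose_conjTranspose, add_comm]
  -- quadratic form of H at w
  have hstar : star w ⬝ᵥ (Uᴴ *ᵥ w) = star (star w ⬝ᵥ (U *ᵥ w)) := by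
    rw [Matrix.star_dotProduct]
    congr 1
    rw [Matrix.star_mulVec, conjTranspose_conjTranspose, ← Matrix.dotProduct_mulVec]
  have quad : star w ⬝ᵥ (H *ᵥ w) = ((2 * (μ.re * cr) : ℝ) : ℂ) := by
    rw [hHdef, Matrix.add_mulVec, dotProduct_add, hstar, key1,
      show star (μ * (cr : ℂ)) = (starRingEnd ℂ) (μ * (cr : ℂ)) from rfl, Complex.add_conj]
    norm_num [Complex.mul_re]
  -- minimal eigenvalue of H
  haveI : Nonempty (Fin r) := ⟨⟨0, hr⟩⟩
  obtain ⟨i₀, -, hmin⟩ := Finset.exists_min_image Finset.univ hH.eigenvalues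
    ⟨Classical.arbitrary (Fin r), Finset.mem_univ _⟩
  set t : ℝ := hH.eigenvalues i₀ with ht
  -- H - t • 1 is positive semidefinite
  have halg : (algebraMap ℝ (Matrix (Fin r) (Fin r) ℂ) t).IsHermitian := by
    ext i j
    rw [Matrix.conjTranspose_apply, Matrix.algebraMap_matrix_apply, Matrix.algebraMap_matrix_apply]
    rcases eq_or_ne i j with rfl | hne
    · simp
    · simp [hne, Ne.symm hne]
  have hH' : (H - algebraMap ℝ (Matrix (Fin r) (Fin r) ℂ) t).IsHermitian := hH.sub halg
  have heignn : ∀ i, 0 ≤ hH'.eigenvalues i := by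
    intro i
    have hs := hH'.eigenvalues_mem_spectrum_real i
    rw [← spectrum.sub_singleton_eq] at hs
    obtain ⟨a, ha, b, hb, hab⟩ := Set.mem_sub.mp hs
    rw [Set.mem_singleton_iff] at hb
    rw [hH.spectrum_real_eq_range_eigenvalues] at ha
    obtain ⟨j, hj⟩ := ha
    have h2 := hmin j (Finset.mem_univ _)
    subst hb
    rw [← hj] at hab
    linarith [hab]
  have hpsd := hH'.posSemidef_iff_eigenvalues_nonneg.mpr heignn
  have hq := hpsd.re_dotProduct_nonneg w
  have hmv : (H - algebraMap ℝ (Matrix (Fin r) (Fin r) ℂ) t) *ᵥ w = H *ᵥ w - (t : ℂ) • w := by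
    rw [Matrix.sub_mulVec]
    congr 1
    rw [Algebra.algebraMap_eq_smul_one, Matrix.smul_mulVec, Matrix.one_mulVec]
    ext i
    simp [Complex.real_smul]
  have hval : star w ⬝ᵥ ((H - algebraMap ℝ (Matrix (Fin r) (Fin r) ℂ) t) *ᵥ w)
      = ((2 * (μ.re * cr) - t * cr : ℝ) : ℂ) := by
    rw [hmv, dotProduct_sub, quad, dotProduct_smul, key2, smul_eq_mul]
    push_cast
    ring
  rw [hval] at hq
  have htle : t ≤ 2 * μ.re := by
    have h3 : (0:ℝ) ≤ 2 * (μ.re * cr) - t * cr := by simpa using hq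
    nlinarith
  -- U commutes with H
  have hcomm : U * H = H * U := by rw [hHdef, mul_add, add_mul, hU1, hU2]
  set E := Module.End.eigenspace (Matrix.toLinAlgEquiv' H) ((t : ℂ)) with hE
  set x₀ : Fin r → ℂ := ⇑(hH.eigenvectorBasis i₀) with hx₀def
  have hx₀ : H *ᵥ x₀ = (t : ℂ) • x₀ := by
    rw [hx₀def, hH.mulVec_eigenvectorBasis i₀]
    ext i
    simp [Complex.real_smul, ht]
  have hx₀0 : x₀ ≠ 0 := by
    intro h0
    exact hH.eigenvectorBasis.orthonormal.ne_zero i₀ (by ext i; exact congrFun h0 i)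
  have hx₀E : x₀ ∈ E := Module.End.mem_eigenspace_iff.mpr
    (by simpa [Matrix.toLinAlgEquiv'_apply] using hx₀)
  have hfE : ∀ x ∈ E, (Matrix.toLinAlgEquiv' U : (Fin r → ℂ) →ₗ[ℂ] (Fin r → ℂ)) x ∈ E := by
    intro x hx
    rw [hE, Module.End.mem_eigenspace_iff] at hx ⊢
    simp only [Matrix.toLinAlgEquiv'_apply] at hx ⊢
    rw [Matrix.mulVec_mulVec, ← hcomm, ← Matrix.mulVec_mulVec, hx, Matrix.mulVec_smul]
  haveI : Nontrivial E := Submodule.nontrivial_iff_ne_bot.mpr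
    (Submodule.ne_bot_iff _ |>.mpr ⟨x₀, hx₀E, hx₀0⟩)
  obtain ⟨ν, hν⟩ := Module.End.exists_eigenvalue
    (((Matrix.toLinAlgEquiv' U : (Fin r → ℂ) →ₗ[ℂ] (Fin r → ℂ))).restrict hfE)
  obtain ⟨y, hy⟩ := hν.exists_hasEigenvector
  set z : Fin r → ℂ := (y : Fin r → ℂ) with hzdef
  have hz0 : z ≠ 0 := fun h0 => hy.2 (Subtype.coe_injective (by simpa [hzdef] using h0))
  have hzU : U *ᵥ z = ν • z := by
    have h4 := congrArg Subtype.val hy.apply_eq_smul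
    rw [LinearMap.restrict_coe_apply] at h4
    simpa [Matrix.toLinAlgEquiv'_apply] using h4
  have hzH : H *ᵥ z = (t : ℂ) • z := by
    have h5 : z ∈ E := y.2
    rw [hE, Module.End.mem_eigenspace_iff] at h5
    simpa [Matrix.toLinAlgEquiv'_apply] using h5
  have hνspec : ν ∈ spectrum ℂ U := by
    rw [← AlgEquiv.spectrum_eq (Matrix.toLinAlgEquiv') U,
      ← Module.End.hasEigenvalue_iff_mem_spectrum]
    exact Module.End.hasEigenvalue_of_hasEigenvector
      ⟨Module.End.mem_eigenspace_iff.mpr (by simpa [Matrix.toLinAlgEquiv'_apply] using hzU), hz0⟩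
  have hc2 : star z ⬝ᵥ z ≠ 0 := by
    have hzsum : star z ⬝ᵥ z = ((∑ i, Complex.normSq (z i) : ℝ) : ℂ) := by
      push_cast
      exact Finset.sum_congr rfl fun i _ => by simp [Complex.normSq_eq_conj_mul_self]
    obtain ⟨i, hi⟩ := Function.ne_iff.mp hz0
    have hpos : 0 < ∑ i, Complex.normSq (z i) := Finset.sum_pos'
      (fun j _ => Complex.normSq_nonneg _) ⟨i, Finset.mem_univ _, Complex.normSq_pos.mpr hi⟩
    rw [hzsum]
    exact_mod_cast hpos.ne'
  have hnorm : (starRingEnd ℂ) ν * ν = 1 := by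
    have e1 : star (U *ᵥ z) ⬝ᵥ (U *ᵥ z) = star z ⬝ᵥ z := by
      rw [Matrix.star_mulVec, ← Matrix.dotProduct_mulVec, Matrix.mulVec_mulVec, hU2,
        Matrix.one_mulVec]
    rw [hzU, star_smul, smul_dotProduct, dotProduct_smul, smul_eq_mul,
      smul_eq_mul, ← mul_assoc] at e1
    have := mul_right_cancel₀ hc2 (e1.trans (one_mul _).symm)
    simpa using this
  have hν0 : ν ≠ 0 := fun h0 => by simp [h0] at hnorm
  have hzUH : Uᴴ *ᵥ z = ((t : ℂ) - ν) • z := by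
    have h6 : U *ᵥ z + Uᴴ *ᵥ z = (t : ℂ) • z := by rw [← Matrix.add_mulVec, ← hHdef, hzH]
    rw [hzU] at h6
    rw [sub_smul, ← h6]
    abel
  have hrel : ((t : ℂ) - ν) * ν = 1 := by
    have h7 : U *ᵥ (Uᴴ *ᵥ z) = z := by rw [Matrix.mulVec_mulVec, hU1, Matrix.one_mulVec]
    rw [hzUH, Matrix.mulVec_smul, hzU, smul_smul] at h7
    have h8 : (((t : ℂ) - ν) * ν - 1) • z = 0 := by
      rw [sub_smul, one_smul, h7, sub_self]
    rcases smul_eq_zero.mp h8 with h9 | h9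
    · linear_combination h9
    · exact absurd h9 hz0
  have ht2 : (t : ℝ) = 2 * ν.re := by
    have h10 : ((t : ℂ) - ν) * ν = (starRingEnd ℂ) ν * ν := hrel.trans hnorm.symm
    have h11 : (t : ℂ) - ν = (starRingEnd ℂ) ν := mul_right_cancel₀ hν0 h10
    have h12 : (t : ℂ) = ν + (starRingEnd ℂ) ν := by linear_combination h11
    rw [Complex.add_conj] at h12
    exact_mod_cast h12
  have habs : ‖ν‖ = 1 := by
    have : ((Complex.normSq ν : ℝ) : ℂ) = 1 := by
      rw [Complex.normSq_eq_conj_mul_self, hnorm]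
    have h13 : Complex.normSq ν = 1 := by exact_mod_cast this
    rw [Complex.norm_def, h13, Real.sqrt_one]
  exact ⟨ν, hνspec, by linarith, habs⟩

/-- If `F₁` is the top-left `n × n` block of a unitary `U ∈ U(r)` and `μ` is an
eigenvalue of `F₁`, then some eigenvalue `ν` of `U` satisfies
`|arg ν| ≥ arccos (Re μ)`. -/
theorem cost_ge_arccos_re_block_eigenvalue {n r : ℕ} (h : n ≤ r)
    (U : Matrix (Fin r) (Fin r) ℂ) (hU : U ∈ Matrix.unitaryGroup (Fin r) ℂ)
    (F₁ : Matrix (Fin n) (Fin n) ℂ)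
    (hF₁ : F₁ = Matrix.of fun i j : Fin n => U (Fin.castLE h i) (Fin.castLE h j))
    (μ : ℂ) (hμ : μ ∈ spectrum ℂ F₁) :
    ∃ ν ∈ spectrum ℂ U, Real.arccos μ.re ≤ |Complex.arg ν| := by
  classical
  have hU1 : U * Uᴴ = 1 := by
    simpa [Matrix.star_eq_conjTranspose] using Matrix.mem_unitaryGroup_iff.mp hU
  have hU2 : Uᴴ * U = 1 := by
    simpa [Matrix.star_eq_conjTranspose] using Matrix.mem_unitaryGroup_iff'.mp hU
  have hμe : Module.End.HasEigenvalue (Matrix.toLinAlgEquiv' F₁) μ := by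
    rw [Module.End.hasEigenvalue_iff_mem_spectrum, AlgEquiv.spectrum_eq]
    exact hμ
  obtain ⟨v, hv⟩ := hμe.exists_hasEigenvector
  have hv1 : F₁ *ᵥ v = μ • v := by
    have := Module.End.mem_eigenspace_iff.mp hv.1
    simpa [Matrix.toLinAlgEquiv'_apply] using this
  have hv0 : v ≠ 0 := hv.2
  have hr : 0 < r := by
    rcases Nat.eq_zero_or_pos n with rfl | hn
    · exact absurd (funext fun i => i.elim0) hv0
    · omega
  set w : Fin r → ℂ := fun i => if h' : (i : ℕ) < n then v ⟨i, h'⟩ else 0 with hw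
  have hwz : ∀ i : Fin r, n ≤ (i : ℕ) → w i = 0 := fun i hi => by
    simp [hw, Nat.not_lt.mpr hi]
  have hwcast : ∀ i : Fin n, w (Fin.castLE h i) = v i := fun i => by
    simp [hw, i.isLt]
  have inner : ∀ i : Fin n, (U *ᵥ w) (Fin.castLE h i) = (F₁ *ᵥ v) i := by
    intro i
    have h0 := sum_castLE_aux h (fun j => U (Fin.castLE h i) j * w j) (fun j hj => by
      simp [hwz j hj])
    simpa [Matrix.mulVec, dotProduct, hF₁, hwcast] using h0
  have key1 : star w ⬝ᵥ (U *ᵥ w) = μ * (star v ⬝ᵥ v) := by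
    have h0 := sum_castLE_aux h (fun i => star (w i) * (U *ᵥ w) i) (fun i hi => by
      simp [hwz i hi])
    calc star w ⬝ᵥ (U *ᵥ w)
        = ∑ i : Fin n, star (w (Fin.castLE h i)) * (U *ᵥ w) (Fin.castLE h i) := by
          simpa [dotProduct] using h0
      _ = ∑ i : Fin n, star (v i) * (μ • v) i := by
          simp only [hwcast, inner, hv1]
      _ = μ * (star v ⬝ᵥ v) := by
          simp only [Pi.smul_apply, smul_eq_mul, dotProduct, Finset.mul_sum,
            Pi.star_apply]
          exact Finset.sum_congr rfl fun i _ => by rw [mul_left_comm]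
  have key2 : star w ⬝ᵥ w = star v ⬝ᵥ v := by
    have h0 := sum_castLE_aux h (fun i => star (w i) * w i) (fun i hi => by simp [hwz i hi])
    simpa [dotProduct, hwcast] using h0
  have hc : star v ⬝ᵥ v = ((∑ i, Complex.normSq (v i) : ℝ) : ℂ) := by
    push_cast
    exact Finset.sum_congr rfl fun i _ => by
      simp [Complex.normSq_eq_conj_mul_self]
  have hcpos : 0 < ∑ i, Complex.normSq (v i) := by
    obtain ⟨i, hi⟩ := Function.ne_iff.mp hv0
    exact Finset.sum_pos' (fun j _ => Complex.normSq_nonneg _)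
      ⟨i, Finset.mem_univ _, Complex.normSq_pos.mpr hi⟩
  have hw0 : w ≠ 0 := by
    intro hww
    apply hv0; funext i
    have := congrFun hww (Fin.castLE h i)
    simpa [hwcast] using this
  obtain ⟨ν, hνspec, hνre, hνabs⟩ := exists_low_re_eigenvalue r hr U hU1 hU2 w hw0 μ
    (∑ i, Complex.normSq (v i)) hcpos (by rw [key1, hc]) (by rw [key2, hc])
  refine ⟨ν, hνspec, ?_⟩
  have hν0 : ν ≠ 0 := by
    intro h0
    rw [h0] at hνabs
    simp at hνabs
  have hcos : Real.cos (Complex.arg ν) = ν.re := by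
    rw [Complex.cos_arg hν0, hνabs, div_one]
  have hargle : |Complex.arg ν| ≤ Real.pi :=
    abs_le.mpr ⟨by linarith [Complex.neg_pi_lt_arg ν], Complex.arg_le_pi ν⟩
  have h1 : Real.arccos ν.re = |Complex.arg ν| := by
    rw [← hcos, ← Real.cos_abs, Real.arccos_cos (abs_nonneg _) hargle]
  have h2 : Real.arccos μ.re ≤ Real.arccos ν.re := by
    rw [Real.arccos_eq_pi_div_two_sub_arcsin, Real.arccos_eq_pi_div_two_sub_arcsin]
    exact sub_le_sub_left (Real.monotone_arcsin hνre) _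
  linarith
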